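/- Let κ > 0, φ > 0 and ν > 4, and set γ_k = (2^k · ν(ν−1)⋯(ν−k+1))^{−1} = (2^k ∏_{i=0}^{k−1}(ν−i))^{−1}. Then for every h = (h₁,h₂) ∈ ℝ² with h ≠ 0, the mixed fourth partial derivative of the Matérn covariance function satisfies ∂⁴C_κ^ν/∂h₁²∂h₂² (h) = γ₂·C_κ^{ν−2}(h) − γ₃·(h₁² + h₂²)·C_κ^{ν−3}(h) + γ₄·h₁²h₂²·C_κ^{ν−4}(h). (This is the covariance function of Example 3 with b₁ = b₂ = 0, B₁ = (1,0)^⊤ and B₂ = (0,1)^⊤: the field X₀ is differentiated in two different directions, so the covariance function of X oscillates in two directions.) -/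

import Mathlib

open Real

/-- The modified Bessel function of the second kind,
`K_ν(x) = ∫₀^∞ exp(−x cosh t) cosh(νt) dt`. -/
noncomputable def besselK (ν x : ℝ) : ℝ :=
  ∫ t in Set.Ioi (0 : ℝ), Real.exp (-x * Real.cosh t) * Real.cosh (ν * t)

/-- The Matérn covariance function on `ℝ²` with scale `κ`, variance parameter `φ²` and
shape parameter `ν`:
`C_κ^ν(h) = (2^{1−ν}φ²/(4π Γ(ν+1) κ^{2ν})) (κ‖h‖)^ν K_ν(κ‖h‖)`. -/
noncomputable def matern (κ φ ν : ℝ) (h : EuclideanSpace ℝ (Fin 2)) : ℝ :=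
  2 ^ (1 - ν) * φ ^ 2 / (4 * π * Real.Gamma (ν + 1) * κ ^ (2 * ν)) *
    (κ * ‖h‖) ^ ν * besselK ν (κ * ‖h‖)

/-- The partial derivative of `g : ℝ² → ℝ` in the `i`-th coordinate direction. -/
noncomputable def pderiv2 (i : Fin 2) (g : EuclideanSpace ℝ (Fin 2) → ℝ) :
    EuclideanSpace ℝ (Fin 2) → ℝ :=
  fun x => fderiv ℝ g x (EuclideanSpace.single i 1)

open MeasureTheory Set Filter

lemma cosh_ge_quad {t : ℝ} (ht : 0 ≤ t) : 1 + t^2/2 ≤ Real.cosh t := by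
  have h2 : Real.cosh t = 2 * Real.sinh (t/2)^2 + 1 := by
    have h := Real.cosh_add (t/2) (t/2)
    rw [show t/2 + t/2 = t by ring] at h
    have hc := Real.cosh_sq (t/2)
    nlinarith
  have hs : t/2 ≤ Real.sinh (t/2) := Real.self_le_sinh_iff.2 (by linarith)
  nlinarith

lemma cosh_le_exp' {t : ℝ} (ht : 0 ≤ t) : Real.cosh t ≤ Real.exp t := by
  rw [Real.cosh_eq]
  have := Real.exp_le_exp.2 (by linarith : -t ≤ t)
  linarith

lemma abs_cosh_le (y : ℝ) : |Real.cosh y| ≤ Real.exp |y| := by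
  rw [abs_of_pos (Real.cosh_pos _), ← Real.cosh_abs]
  exact cosh_le_exp' (abs_nonneg y)

lemma abs_sinh_le (y : ℝ) : |Real.sinh y| ≤ Real.exp |y| := by
  have h1 := Real.cosh_add_sinh y
  have h2 := Real.cosh_sub_sinh y
  have := Real.exp_pos y
  have := Real.exp_pos (-y)
  have h3 : |Real.sinh y| ≤ Real.cosh y := by
    rw [abs_le]; constructor <;> nlinarith
  refine h3.trans ?_
  rw [← Real.cosh_abs]
  exact cosh_le_exp' (abs_nonneg y)



lemma integrableOn_exp_lin_sub_cosh (x b : ℝ) (hx : 0 < x) :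
    IntegrableOn (fun t => Real.exp (b*t - x * Real.cosh t)) (Set.Ioi 0) := by
  have hg : Integrable (fun t : ℝ =>
      Real.exp (b^2/(2*x) - x) * Real.exp (-(x/2) * (t - b/x)^2)) := by
    exact ((integrable_exp_neg_mul_sq (by positivity)).comp_sub_right (b/x)).const_mul _
  refine (hg.integrableOn).mono' ?_ ?_
  · exact (Continuous.aestronglyMeasurable (by fun_prop)).restrict
  · refine (ae_restrict_iff' measurableSet_Ioi).2 (ae_of_all _ fun t ht => ?_)
    rw [Real.norm_eq_abs, abs_of_pos (Real.exp_pos _), ← Real.exp_add]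
    apply Real.exp_le_exp.2
    have h := cosh_ge_quad (le_of_lt ht)
    have h2 : b^2/(2*x) - x + (-(x/2)*(t-b/x)^2) = b*t - x - x*t^2/2 := by
      field_simp; ring
    rw [h2]
    nlinarith [mul_le_mul_of_nonneg_left h hx.le]



lemma integrableOn_exp_cosh_mul (x : ℝ) (hx : 0 < x) {P : ℝ → ℝ} (hP : Continuous P)
    (C c : ℝ) (hPb : ∀ t, 0 < t → |P t| ≤ C * Real.exp (c*t)) :
    IntegrableOn (fun t => Real.exp (-x * Real.cosh t) * P t) (Set.Ioi 0) := by
  refine (((integrableOn_exp_lin_sub_cosh x c hx).const_mul C)).mono' ?_ ?_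
  · exact (Continuous.aestronglyMeasurable (by fun_prop)).restrict
  · refine (ae_restrict_iff' measurableSet_Ioi).2 (ae_of_all _ fun t ht => ?_)
    rw [Real.norm_eq_abs, abs_mul, abs_of_pos (Real.exp_pos _)]
    calc Real.exp (-x*Real.cosh t) * |P t| ≤ Real.exp (-x*Real.cosh t) * (C * Real.exp (c*t)) :=
          mul_le_mul_of_nonneg_left (hPb t ht) (Real.exp_pos _).le
      _ = C * Real.exp (c*t - x*Real.cosh t) := by
          rw [mul_left_comm, ← Real.exp_add]; ring_nf

lemma besselK_integrableOn (ν x : ℝ) (hx : 0 < x) :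
    IntegrableOn (fun t => Real.exp (-x * Real.cosh t) * Real.cosh (ν * t)) (Set.Ioi 0) := by
  refine integrableOn_exp_cosh_mul x hx (by fun_prop) 1 |ν| fun t ht => ?_
  rw [one_mul]
  refine (abs_cosh_le _).trans (le_of_eq ?_)
  rw [abs_mul, abs_of_pos ht]

lemma besselK_hasDerivAt (ν x : ℝ) (hx : 0 < x) :
    HasDerivAt (fun y => besselK ν y) (-(besselK (ν-1) x + besselK (ν+1) x)/2) x := by
  have key := hasDerivAt_integral_of_dominated_loc_of_deriv_le
    (μ := volume.restrict (Set.Ioi (0:ℝ)))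
    (F := fun (y : ℝ) (t : ℝ) => Real.exp (-y * Real.cosh t) * Real.cosh (ν*t))
    (F' := fun (y : ℝ) (t : ℝ) => Real.exp (-y * Real.cosh t) * (-(Real.cosh t * Real.cosh (ν*t))))
    (x₀ := x) (s := Metric.ball x (x/2))
    (bound := fun t => Real.exp ((1+|ν|)*t - (x/2)*Real.cosh t))
    (Metric.ball_mem_nhds x (by positivity))
    (Eventually.of_forall fun y => (Continuous.aestronglyMeasurable (by fun_prop)).restrict)
    (besselK_integrableOn ν x hx)
    ((Continuous.aestronglyMeasurable (by fun_prop)).restrict)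
    ?_ (integrableOn_exp_lin_sub_cosh (x/2) (1+|ν|) (by positivity)) ?_
  · have hd := key.2
    have hval : (∫ t in Set.Ioi (0:ℝ),
        Real.exp (-x * Real.cosh t) * (-(Real.cosh t * Real.cosh (ν*t))))
        = -(besselK (ν-1) x + besselK (ν+1) x)/2 := by
      have hfun : ∀ t : ℝ, Real.exp (-x * Real.cosh t) * (-(Real.cosh t * Real.cosh (ν*t)))
          = (-(1/2)) * (Real.exp (-x * Real.cosh t) * Real.cosh ((ν-1)*t)
            + Real.exp (-x * Real.cosh t) * Real.cosh ((ν+1)*t)) := by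
        intro t
        have h1 := Real.cosh_add (ν*t) t
        have h2 := Real.cosh_sub (ν*t) t
        have e1 : (ν+1)*t = ν*t + t := by ring
        have e2 : (ν-1)*t = ν*t - t := by ring
        rw [e1, e2, h1, h2]; ring
      rw [show (fun t => Real.exp (-x * Real.cosh t) * (-(Real.cosh t * Real.cosh (ν*t))))
          = fun t => (-(1/2)) * (Real.exp (-x * Real.cosh t) * Real.cosh ((ν-1)*t)
            + Real.exp (-x * Real.cosh t) * Real.cosh ((ν+1)*t)) from funext hfun,
        integral_const_mul,
        MeasureTheory.integral_add (besselK_integrableOn (ν-1) x hx) (besselK_integrableOn (ν+1) x hx)]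
      show (-(1/2)) * (besselK (ν-1) x + besselK (ν+1) x) = _
      ring
    rw [hval] at hd
    exact hd
  · refine (ae_restrict_iff' measurableSet_Ioi).2 (ae_of_all _ fun t ht y hy => ?_)
    have hy2 : x/2 < y := by
      rw [Metric.mem_ball, Real.dist_eq, abs_lt] at hy
      linarith [hy.1]
    rw [Real.norm_eq_abs, abs_mul, abs_of_pos (Real.exp_pos _), abs_neg, abs_mul]
    have hbt : |Real.cosh t| * |Real.cosh (ν*t)| ≤ Real.exp ((1+|ν|)*t) := by
      calc |Real.cosh t| * |Real.cosh (ν*t)| ≤ Real.exp |t| * Real.exp |ν*t| :=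
            mul_le_mul (abs_cosh_le t) (abs_cosh_le (ν*t)) (abs_nonneg _) (Real.exp_pos _).le
        _ = Real.exp ((1+|ν|)*t) := by
            rw [← Real.exp_add, abs_of_pos ht, abs_mul, abs_of_pos (show (0:ℝ) < t from ht)]; ring_nf
    have hexp : Real.exp (-y * Real.cosh t) ≤ Real.exp (-(x/2) * Real.cosh t) := by
      apply Real.exp_le_exp.2
      have := Real.cosh_pos t
      nlinarith
    calc Real.exp (-y * Real.cosh t) * (|Real.cosh t| * |Real.cosh (ν*t)|)
        ≤ Real.exp (-(x/2) * Real.cosh t) * Real.exp ((1+|ν|)*t) :=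
          mul_le_mul hexp hbt (by positivity) (Real.exp_pos _).le
      _ = Real.exp ((1+|ν|)*t - (x/2)*Real.cosh t) := by rw [← Real.exp_add]; ring_nf
  · refine (ae_restrict_iff' measurableSet_Ioi).2 (ae_of_all _ fun t ht y hy => ?_)
    have h1 : HasDerivAt (fun y : ℝ => -y * Real.cosh t) (-Real.cosh t) y := by
      simpa using ((hasDerivAt_id y).neg.mul_const (Real.cosh t))
    have := (h1.exp).mul_const (Real.cosh (ν*t))
    refine this.congr_deriv (Eq.symm ?_)
    ring

lemma sinh_sinh_integrableOn (ν x : ℝ) (hx : 0 < x) :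
    IntegrableOn (fun t => Real.exp (-x * Real.cosh t) * (Real.sinh t * Real.sinh (ν*t)))
      (Set.Ioi 0) := by
  refine integrableOn_exp_cosh_mul x hx (by fun_prop) 1 (1+|ν|) fun t ht => ?_
  rw [one_mul, abs_mul]
  calc |Real.sinh t| * |Real.sinh (ν*t)| ≤ Real.exp |t| * Real.exp |ν*t| :=
        mul_le_mul (abs_sinh_le t) (abs_sinh_le (ν*t)) (abs_nonneg _) (Real.exp_pos _).le
    _ = Real.exp ((1+|ν|)*t) := by
        rw [← Real.exp_add, abs_of_pos ht, abs_mul, abs_of_pos ht]; ring_nf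

lemma besselK_recurrence (ν x : ℝ) (hx : 0 < x) :
    x * (besselK (ν+1) x - besselK (ν-1) x) = 2*ν*besselK ν x := by
  set f : ℝ → ℝ := fun t => Real.exp (-x * Real.cosh t) * Real.sinh (ν*t) with hf
  set f' : ℝ → ℝ := fun t => Real.exp (-x * Real.cosh t)
      * (ν * Real.cosh (ν*t) - x * (Real.sinh t * Real.sinh (ν*t))) with hf'
  have hderiv : ∀ t ∈ Set.Ioi (0:ℝ), HasDerivAt f (f' t) t := by
    intro t _
    have h1 : HasDerivAt (fun t : ℝ => -x * Real.cosh t) (-x * Real.sinh t) t :=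
      (Real.hasDerivAt_cosh t).const_mul (-x)
    have h2 : HasDerivAt (fun t : ℝ => Real.sinh (ν*t)) (Real.cosh (ν*t) * ν) t :=
      (Real.hasDerivAt_sinh (ν*t)).comp t (by simpa using (hasDerivAt_id t).const_mul ν)
    have := (h1.exp).fun_mul h2
    refine this.congr_deriv (Eq.symm ?_)
    simp only [hf']; ring
  have hfint : IntegrableOn f' (Set.Ioi 0) := by
    refine integrableOn_exp_cosh_mul x hx (by fun_prop) (|ν| + x) (1+|ν|) fun t ht => ?_
    have b1 : |ν * Real.cosh (ν*t)| ≤ |ν| * Real.exp ((1+|ν|)*t) := by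
      rw [abs_mul]
      refine mul_le_mul_of_nonneg_left ((abs_cosh_le _).trans ?_) (abs_nonneg ν)
      apply Real.exp_le_exp.2
      rw [abs_mul, abs_of_pos ht]
      nlinarith [abs_nonneg ν]
    have b2 : |x * (Real.sinh t * Real.sinh (ν*t))| ≤ x * Real.exp ((1+|ν|)*t) := by
      rw [abs_mul, abs_of_pos hx, abs_mul]
      refine mul_le_mul_of_nonneg_left ?_ hx.le
      calc |Real.sinh t| * |Real.sinh (ν*t)| ≤ Real.exp |t| * Real.exp |ν*t| :=
            mul_le_mul (abs_sinh_le t) (abs_sinh_le (ν*t)) (abs_nonneg _) (Real.exp_pos _).le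
        _ = Real.exp ((1+|ν|)*t) := by
            rw [← Real.exp_add, abs_of_pos ht, abs_mul, abs_of_pos ht]; ring_nf
    calc |ν * Real.cosh (ν*t) - x * (Real.sinh t * Real.sinh (ν*t))|
        ≤ |ν * Real.cosh (ν*t)| + |x * (Real.sinh t * Real.sinh (ν*t))| := abs_sub _ _
      _ ≤ (|ν| + x) * Real.exp ((1+|ν|)*t) := by nlinarith
  have htends : Tendsto f atTop (nhds 0) := by
    have haux : Tendsto (fun t => |ν| * t - x*Real.cosh t) atTop atBot := by
      refine tendsto_atBot_mono' atTop ?_ tendsto_neg_atTop_atBot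
      filter_upwards [eventually_ge_atTop (max 1 (2*(|ν|+1)/x))] with t ht
      have ht1 : (1:ℝ) ≤ t := le_trans (le_max_left _ _) ht
      have ht2 : 2*(|ν|+1)/x ≤ t := le_trans (le_max_right _ _) ht
      have hc : 1 + t^2/2 ≤ Real.cosh t := cosh_ge_quad (by linarith)
      have h3 : (|ν|+1) * t ≤ x * (t^2/2) := by
        rw [div_le_iff₀ hx] at ht2
        nlinarith
      nlinarith [mul_le_mul_of_nonneg_left hc hx.le]
    apply squeeze_zero_norm' _ (Real.tendsto_exp_atBot.comp haux)
    filter_upwards [eventually_ge_atTop (0:ℝ)] with t ht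
    simp only [Function.comp]
    rw [Real.norm_eq_abs, hf, abs_mul, abs_of_pos (Real.exp_pos _)]
    calc Real.exp (-x*Real.cosh t) * |Real.sinh (ν*t)|
          ≤ Real.exp (-x*Real.cosh t) * Real.exp |ν*t| :=
            mul_le_mul_of_nonneg_left (abs_sinh_le _) (Real.exp_pos _).le
        _ ≤ Real.exp (|ν| * t - x*Real.cosh t) := by
            rw [← Real.exp_add]
            apply Real.exp_le_exp.2
            rw [abs_mul, abs_of_nonneg ht]
            ring_nf; rfl
  have hzero : ∫ t in Set.Ioi (0:ℝ), f' t = 0 := by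
    rw [MeasureTheory.integral_Ioi_of_hasDerivAt_of_tendsto
      (Continuous.continuousWithinAt (by fun_prop)) hderiv hfint htends]
    simp [hf]
  have hsplit : ∫ t in Set.Ioi (0:ℝ), f' t
      = ν * besselK ν x - x * ∫ t in Set.Ioi (0:ℝ),
          Real.exp (-x * Real.cosh t) * (Real.sinh t * Real.sinh (ν*t)) := by
    rw [show f' = fun t => ν * (Real.exp (-x * Real.cosh t) * Real.cosh (ν*t))
        - x * (Real.exp (-x * Real.cosh t) * (Real.sinh t * Real.sinh (ν*t))) from
      funext fun t => by simp only [hf']; ring]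
    rw [MeasureTheory.integral_sub ((besselK_integrableOn ν x hx).const_mul ν)
      ((sinh_sinh_integrableOn ν x hx).const_mul x), integral_const_mul, integral_const_mul]
    rfl
  have hsinh : ∫ t in Set.Ioi (0:ℝ),
      Real.exp (-x * Real.cosh t) * (Real.sinh t * Real.sinh (ν*t))
      = (besselK (ν+1) x - besselK (ν-1) x)/2 := by
    rw [show (fun t => Real.exp (-x * Real.cosh t) * (Real.sinh t * Real.sinh (ν*t)))
        = fun t => (1/2) * (Real.exp (-x * Real.cosh t) * Real.cosh ((ν+1)*t))
          - (1/2) * (Real.exp (-x * Real.cosh t) * Real.cosh ((ν-1)*t)) from funext fun t => ?_]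
    · rw [MeasureTheory.integral_sub ((besselK_integrableOn (ν+1) x hx).const_mul (1/2))
        ((besselK_integrableOn (ν-1) x hx).const_mul (1/2)), integral_const_mul, integral_const_mul]
      show (1/2) * besselK (ν+1) x - (1/2) * besselK (ν-1) x = _
      ring
    · have h1 := Real.cosh_add (ν*t) t
      have h2 := Real.cosh_sub (ν*t) t
      have e1 : (ν+1)*t = ν*t + t := by ring
      have e2 : (ν-1)*t = ν*t - t := by ring
      rw [e1, e2, h1, h2]; ring
  rw [hsplit, hsinh] at hzero
  linarith

lemma hasDerivAt_rpow_mul_besselK (ν x : ℝ) (hx : 0 < x) :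
    HasDerivAt (fun y : ℝ => y ^ ν * besselK ν y) (-(x ^ ν * besselK (ν-1) x)) x := by
  have h1 : HasDerivAt (fun y : ℝ => y ^ ν) (ν * x ^ (ν-1)) x :=
    Real.hasDerivAt_rpow_const (Or.inl hx.ne')
  have h2 := besselK_hasDerivAt ν x hx
  have hrec := besselK_recurrence ν x hx
  have hxν : x ^ ν = x ^ (ν-1) * x := by
    rw [← Real.rpow_add_one hx.ne' (ν-1)]; ring_nf
  have := h1.fun_mul h2
  refine this.congr_deriv (Eq.symm ?_)
  rw [hxν]
  linear_combination (x ^ (ν-1)/2) * hrec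





noncomputable def maternC (κ φ ν : ℝ) : ℝ :=
  2 ^ (1 - ν) * φ ^ 2 / (4 * π * Real.Gamma (ν + 1) * κ ^ (2 * ν))

noncomputable def maternG (κ φ ν : ℝ) (s : ℝ) : ℝ :=
  maternC κ φ ν * ((κ * Real.sqrt s) ^ ν * besselK ν (κ * Real.sqrt s))

lemma matern_eq_maternG (κ φ ν : ℝ) (h : EuclideanSpace ℝ (Fin 2)) :
    matern κ φ ν h = maternG κ φ ν (‖h‖^2) := by
  rw [matern, maternG, maternC, Real.sqrt_sq (norm_nonneg h), mul_assoc]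

lemma maternC_rel (κ φ ν : ℝ) (hκ : 0 < κ) (hν : 0 < ν) :
    maternC κ φ (ν-1) = 4*ν * (κ^2/2) * maternC κ φ ν := by
  rw [maternC, maternC, Real.Gamma_add_one hν.ne', show ν - 1 + 1 = ν by ring]
  have h1 : (2:ℝ) ^ (1-(ν-1)) = 2 * 2^(1-ν) := by
    rw [show 1-(ν-1) = 1 + (1-ν) by ring, Real.rpow_add (by norm_num), Real.rpow_one]
  have h2 : κ ^ (2*ν) = κ ^ (2*(ν-1)) * κ^2 := by
    rw [show (2:ℝ)*ν = 2*(ν-1) + 2 by ring, Real.rpow_add hκ, Real.rpow_two]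
  have hΓ : Real.Gamma ν ≠ 0 := (Real.Gamma_pos_of_pos hν).ne'
  have hκ' : κ ≠ 0 := hκ.ne'
  have hπ : (π:ℝ) ≠ 0 := Real.pi_ne_zero
  rw [h1, h2]
  have hκν : κ ^ (2*(ν-1)) ≠ 0 := (Real.rpow_pos_of_pos hκ _).ne'
  field_simp
  ring

lemma maternG_hasDerivAt (κ φ ν : ℝ) (hκ : 0 < κ) (hν : 0 < ν) {s : ℝ} (hs : 0 < s) :
    HasDerivAt (maternG κ φ ν) (-(1/(4*ν)) * maternG κ φ (ν-1) s) s := by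
  have hss : Real.sqrt s ≠ 0 := (Real.sqrt_pos.2 hs).ne'
  have hx : 0 < κ * Real.sqrt s := mul_pos hκ (Real.sqrt_pos.2 hs)
  have hinner : HasDerivAt (fun s : ℝ => κ * Real.sqrt s) (κ * (1 / (2 * Real.sqrt s))) s :=
    (Real.hasDerivAt_sqrt hs.ne').const_mul κ
  have houter := hasDerivAt_rpow_mul_besselK ν (κ * Real.sqrt s) hx
  have hcomp := (houter.comp s hinner).const_mul (maternC κ φ ν)
  refine hcomp.congr_deriv (Eq.symm ?_)
  rw [maternG, maternC_rel κ φ ν hκ hν]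
  have hpow : (κ * Real.sqrt s) ^ ν = (κ * Real.sqrt s) ^ (ν-1) * (κ * Real.sqrt s) := by
    rw [← Real.rpow_add_one hx.ne' (ν-1)]; ring_nf
  rw [hpow]
  field_simp

abbrev E2 := EuclideanSpace ℝ (Fin 2)

lemma normsq_eq (x : E2) : ‖x‖^2 = x 0 * x 0 + x 1 * x 1 := by
  rw [EuclideanSpace.norm_eq, Real.sq_sqrt (by positivity)]
  rw [Fin.sum_univ_two]
  simp only [Real.norm_eq_abs, sq_abs]
  ring

lemma hasFDerivAt_normsq (h : E2) :
    HasFDerivAt (fun x : E2 => ‖x‖^2)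
      ((2 * h 0) • (EuclideanSpace.proj (𝕜 := ℝ) (0:Fin 2))
        + (2 * h 1) • (EuclideanSpace.proj (𝕜 := ℝ) (1:Fin 2))) h := by
  have h0 : HasFDerivAt (fun x : E2 => x 0) (EuclideanSpace.proj (𝕜 := ℝ) (0:Fin 2)) h :=
    (EuclideanSpace.proj (𝕜 := ℝ) (0:Fin 2)).hasFDerivAt
  have h1 : HasFDerivAt (fun x : E2 => x 1) (EuclideanSpace.proj (𝕜 := ℝ) (1:Fin 2)) h :=
    (EuclideanSpace.proj (𝕜 := ℝ) (1:Fin 2)).hasFDerivAt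
  have := (h0.fun_mul h0).fun_add (h1.fun_mul h1)
  have heq : (fun x : E2 => x 0 * x 0 + x 1 * x 1) = fun x : E2 => ‖x‖^2 :=
    funext fun x => (normsq_eq x).symm
  rw [heq] at this
  refine this.congr_fderiv (Eq.symm ?_)
  ext v
  simp [two_mul]
  ring

lemma matern_hasFDerivAt (κ φ ν : ℝ) (hκ : 0 < κ) (hν : 0 < ν) {h : E2} (hh : h ≠ 0) :
    HasFDerivAt (matern κ φ ν)
      ((-(1/(4*ν)) * matern κ φ (ν-1) h) •
        ((2 * h 0) • (EuclideanSpace.proj (𝕜 := ℝ) (0:Fin 2))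
          + (2 * h 1) • (EuclideanSpace.proj (𝕜 := ℝ) (1:Fin 2)))) h := by
  have hs : 0 < ‖h‖^2 := by have := norm_pos_iff.2 hh; positivity
  have hG := (maternG_hasDerivAt κ φ ν hκ hν hs).comp_hasFDerivAt h (hasFDerivAt_normsq h)
  have heq : (maternG κ φ ν ∘ fun x : E2 => ‖x‖^2) = matern κ φ ν :=
    funext fun x => (matern_eq_maternG κ φ ν x).symm
  rw [heq, ← matern_eq_maternG] at hG
  exact hG

lemma pderiv2_eval {g f : E2 → ℝ} {f' : E2 →L[ℝ] ℝ} {h : E2} (i : Fin 2)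
    (hh : h ≠ 0) (hfg : ∀ x : E2, x ≠ 0 → g x = f x) (hf : HasFDerivAt f f' h) :
    pderiv2 i g h = f' (EuclideanSpace.single i 1) := by
  have hev : g =ᶠ[nhds h] f := by
    filter_upwards [isOpen_compl_singleton.mem_nhds hh] with x hx using hfg x hx
  simp only [pderiv2]
  rw [hev.fderiv_eq, hf.fderiv]

set_option maxHeartbeats 2000000 in
/-- Example 3 with `b₁ = b₂ = 0`, `B₁ = (1,0)^⊤`, `B₂ = (0,1)^⊤`: the mixed fourth partial
derivative of the Matérn covariance satisfies
`∂⁴C_κ^ν/∂h₁²∂h₂²(h) = γ₂ C_κ^{ν−2}(h) − γ₃ (h₁²+h₂²) C_κ^{ν−3}(h) + γ₄ h₁²h₂² C_κ^{ν−4}(h)`,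
where `γ_k = (2^k ∏_{i=0}^{k−1}(ν−i))⁻¹`. -/
theorem matern_mixed_fourth_partial (κ φ ν : ℝ) (hκ : 0 < κ) (hφ : 0 < φ) (hν : 4 < ν)
    (h : EuclideanSpace ℝ (Fin 2)) (hh : h ≠ 0) :
    (pderiv2 0)^[2] ((pderiv2 1)^[2] (matern κ φ ν)) h
      = (2 ^ 2 * ∏ i ∈ Finset.range 2, (ν - i))⁻¹ * matern κ φ (ν - 2) h
        - (2 ^ 3 * ∏ i ∈ Finset.range 3, (ν - i))⁻¹ * (h 0 ^ 2 + h 1 ^ 2)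
            * matern κ φ (ν - 3) h
        + (2 ^ 4 * ∏ i ∈ Finset.range 4, (ν - i))⁻¹ * (h 0 ^ 2 * h 1 ^ 2)
            * matern κ φ (ν - 4) h := by
  have hν0 : 0 < ν := by linarith
  have hν1 : 0 < ν - 1 := by linarith
  have hν2 : 0 < ν - 2 := by linarith
  have hν3 : 0 < ν - 3 := by linarith
  have hP0 : ∀ x : E2, HasFDerivAt (fun x : E2 => x 0)
      (EuclideanSpace.proj (𝕜 := ℝ) (0:Fin 2)) x :=
    fun x => (EuclideanSpace.proj (𝕜 := ℝ) (0:Fin 2)).hasFDerivAt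
  have hP1 : ∀ x : E2, HasFDerivAt (fun x : E2 => x 1)
      (EuclideanSpace.proj (𝕜 := ℝ) (1:Fin 2)) x :=
    fun x => (EuclideanSpace.proj (𝕜 := ℝ) (1:Fin 2)).hasFDerivAt
  have step1 : ∀ x : E2, x ≠ 0 → pderiv2 1 (matern κ φ ν) x
      = -(1/(4*ν)) * matern κ φ (ν-1) x * (2 * x 1) := by
    intro x hx
    rw [pderiv2_eval 1 hx (fun _ _ => rfl) (matern_hasFDerivAt κ φ ν hκ hν0 hx)]
    simp [ContinuousLinearMap.add_apply, ContinuousLinearMap.smul_apply,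
      EuclideanSpace.single_apply]
  have step2 : ∀ x : E2, x ≠ 0 → pderiv2 1 (pderiv2 1 (matern κ φ ν)) x
      = -(1/(2*ν)) * matern κ φ (ν-1) x
        + 1/(4*ν*(ν-1)) * (x 1 * x 1) * matern κ φ (ν-2) x := by
    intro x hx
    have hM1 := matern_hasFDerivAt κ φ (ν-1) hκ hν1 hx
    rw [show ν-1-1 = ν-2 from by ring] at hM1
    have hf := ((hP1 x).fun_mul hM1).const_mul (-(1/(2*ν)))
    rw [pderiv2_eval 1 hx (fun y hy => by rw [step1 y hy]; ring) hf]
    simp [ContinuousLinearMap.add_apply, ContinuousLinearMap.smul_apply,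
      EuclideanSpace.single_apply]
    field_simp
    ring
  have step3 : ∀ x : E2, x ≠ 0 → pderiv2 0 (pderiv2 1 (pderiv2 1 (matern κ φ ν))) x
      = 1/(4*ν*(ν-1)) * (x 0 * matern κ φ (ν-2) x)
        - 1/(8*ν*(ν-1)*(ν-2)) * (x 0 * (x 1 * x 1) * matern κ φ (ν-3) x) := by
    intro x hx
    have hM1 := matern_hasFDerivAt κ φ (ν-1) hκ hν1 hx
    rw [show ν-1-1 = ν-2 from by ring] at hM1
    have hM2 := matern_hasFDerivAt κ φ (ν-2) hκ hν2 hx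
    rw [show ν-2-1 = ν-3 from by ring] at hM2
    have hf := (hM1.const_mul (-(1/(2*ν)))).fun_add
      ((((hP1 x).fun_mul (hP1 x)).fun_mul hM2).const_mul (1/(4*ν*(ν-1))))
    rw [pderiv2_eval 0 hx (fun y hy => by rw [step2 y hy]; ring) hf]
    simp [ContinuousLinearMap.add_apply, ContinuousLinearMap.smul_apply,
      EuclideanSpace.single_apply]
    field_simp
    ring
  have hM2h := matern_hasFDerivAt κ φ (ν-2) hκ hν2 hh
  rw [show ν-2-1 = ν-3 from by ring] at hM2h
  have hM3h := matern_hasFDerivAt κ φ (ν-3) hκ hν3 hh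
  rw [show ν-3-1 = ν-4 from by ring] at hM3h
  have hf4 := ((((hP0 h).fun_mul hM2h)).const_mul (1/(4*ν*(ν-1)))).fun_add
    ((((hP0 h).fun_mul (((hP1 h).fun_mul (hP1 h)).fun_mul hM3h))).const_mul (-(1/(8*ν*(ν-1)*(ν-2)))))
  have final := pderiv2_eval (g := pderiv2 0 (pderiv2 1 (pderiv2 1 (matern κ φ ν)))) 0 hh
    (fun y hy => by rw [step3 y hy]; ring) hf4
  show pderiv2 0 (pderiv2 0 (pderiv2 1 (pderiv2 1 (matern κ φ ν)))) h = _
  rw [final]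
  simp only [ContinuousLinearMap.add_apply, ContinuousLinearMap.smul_apply,
    ContinuousLinearMap.coe_smul', Pi.smul_apply, smul_eq_mul, PiLp.proj_apply,
    EuclideanSpace.single_apply, Finset.prod_range_succ, Finset.prod_range_zero]
  norm_num
  field_simp
  ring
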